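/- With dω³ = ρω¹∧ω² + Aω¹∧ω̄¹ + Bω¹∧ω̄² + Cω²∧ω̄¹ + Dω²∧ω̄² and its conjugate dω̄³, if dω³ and dω̄³ are linearly dependent over ℂ then |Δ₁|² = Δ₂², where Δ₁ = AD - BC and Δ₂ = ½(|B|² + |C|² - AD̄ - ĀD - |ρ|²). -/

import Mathlib

open ExteriorAlgebra

lemma exists_dual_family {K : Type*} [Field K] {V : Type*} [AddCommGroup V] [Module K V]
    {n : ℕ} {v : Fin n → V} (h : LinearIndependent K v) :
    ∃ φ : Fin n → (V →ₗ[K] K), ∀ i j, (φ i) (v j) = if j = i then 1 else 0 := by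
  classical
  set p := Submodule.span K (Set.range v) with hp
  let b : Module.Basis (Fin n) K p := Module.Basis.span h
  choose φ hφ using fun i => LinearMap.exists_extend (V' := K) (b.coord i)
  refine ⟨φ, fun i j => ?_⟩
  have hvj : v j = ((b j : p) : V) := (congrArg Subtype.val (Module.Basis.span_apply h j)).symm
  have key : (φ i) ((p.subtype) (b j)) = b.coord i (b j) := LinearMap.congr_fun (hφ i) (b j)
  rw [hvj, show ((b j : p) : V) = p.subtype (b j) from rfl, key, Module.Basis.coord_apply,
    Module.Basis.repr_self, Finsupp.single_apply]

noncomputable def Phi {V : Type*} [AddCommGroup V] [Module ℂ V]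
    (f g : V →ₗ[ℂ] ℂ) : ExteriorAlgebra ℂ V →ₗ[ℂ] ℂ :=
  liftAlternating (Function.update (fun _ => 0) 2
    ((Matrix.detRowAlternating : (Fin 2 → ℂ) [⋀^Fin 2]→ₗ[ℂ] ℂ).compLinearMap
      (LinearMap.pi ![f, g])))

lemma Phi_apply {V : Type*} [AddCommGroup V] [Module ℂ V] (f g : V →ₗ[ℂ] ℂ) (x y : V) :
    Phi f g (ι ℂ x * ι ℂ y) = f x * g y - g x * f y := by
  have hmul : (ι ℂ x * ι ℂ y : ExteriorAlgebra ℂ V) = ιMulti ℂ 2 ![x, y] := by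
    simp [ιMulti_apply, List.ofFn_succ]
  have hdet : ∀ M : Matrix (Fin 2) (Fin 2) ℂ,
      Matrix.detRowAlternating M = M 0 0 * M 1 1 - M 0 1 * M 1 0 := fun M => Matrix.det_fin_two M
  rw [hmul, Phi, liftAlternating_apply_ιMulti, Function.update_self,
    AlternatingMap.compLinearMap_apply]
  erw [hdet]
  simp [LinearMap.pi_apply]

/-- The 2-form `dω³` determined by the structure equations. -/
noncomputable def dOmega3 {V : Type*} [AddCommGroup V] [Module ℂ V]
    (ω1 ω2 bω1 bω2 : V) (ρ A B C D : ℂ) : ExteriorAlgebra ℂ V :=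
  ρ • (ι ℂ ω1 * ι ℂ ω2) + A • (ι ℂ ω1 * ι ℂ bω1) + B • (ι ℂ ω1 * ι ℂ bω2) +
    C • (ι ℂ ω2 * ι ℂ bω1) + D • (ι ℂ ω2 * ι ℂ bω2)

/-- The conjugate 2-form `dω̄³`. -/
noncomputable def dOmegaBar3 {V : Type*} [AddCommGroup V] [Module ℂ V]
    (ω1 ω2 bω1 bω2 : V) (ρ A B C D : ℂ) : ExteriorAlgebra ℂ V :=
  (starRingEnd ℂ) ρ • (ι ℂ bω1 * ι ℂ bω2) + (starRingEnd ℂ) A • (ι ℂ bω1 * ι ℂ ω1) +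
    (starRingEnd ℂ) B • (ι ℂ bω1 * ι ℂ ω2) + (starRingEnd ℂ) C • (ι ℂ bω2 * ι ℂ ω1) +
    (starRingEnd ℂ) D • (ι ℂ bω2 * ι ℂ ω2)

/-- If `dω³` and `dω̄³` are linearly dependent over `ℂ` then `|Δ₁|² = Δ₂²`, where
`Δ₁ = AD - BC` and `Δ₂ = ½(|B|² + |C|² - AD̄ - ĀD - |ρ|²)`. -/
theorem dependent_implies_delta_eq {V : Type*} [AddCommGroup V] [Module ℂ V]
    (ω1 ω2 bω1 bω2 : V) (hli : LinearIndependent ℂ ![ω1, ω2, bω1, bω2])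
    (ρ A B C D : ℂ)
    (hdep : ¬ LinearIndependent ℂ
      ![dOmega3 ω1 ω2 bω1 bω2 ρ A B C D, dOmegaBar3 ω1 ω2 bω1 bω2 ρ A B C D]) :
    Complex.normSq (A * D - B * C) =
      ((Complex.normSq B + Complex.normSq C -
        (A * (starRingEnd ℂ) D + (starRingEnd ℂ) A * D).re - Complex.normSq ρ) / 2) ^ 2 := by
  classical
  obtain ⟨φ, hφ⟩ := exists_dual_family hli
  have k0 : ∀ i, φ i ω1 = if (0 : Fin 4) = i then 1 else 0 := fun i => by simpa using hφ i 0
  have k1 : ∀ i, φ i ω2 = if (1 : Fin 4) = i then 1 else 0 := fun i => by simpa using hφ i 1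
  have k2 : ∀ i, φ i bω1 = if (2 : Fin 4) = i then 1 else 0 := fun i => by simpa using hφ i 2
  have k3 : ∀ i, φ i bω2 = if (3 : Fin 4) = i then 1 else 0 := fun i => by simpa using hφ i 3
  rw [LinearIndependent.pair_iff] at hdep
  push_neg at hdep
  obtain ⟨a, b, hab0, hab⟩ := hdep
  have E : ∀ i j : Fin 4, a * Phi (φ i) (φ j) (dOmega3 ω1 ω2 bω1 bω2 ρ A B C D) +
      b * Phi (φ i) (φ j) (dOmegaBar3 ω1 ω2 bω1 bω2 ρ A B C D) = 0 := by
    intro i j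
    have h0 := congrArg (Phi (φ i) (φ j)) hab0
    simpa [map_add, map_smul, smul_eq_mul] using h0
  have e1 : a * ρ = 0 := by
    have h := E 0 1
    simp only [dOmega3, dOmegaBar3, map_add, map_smul, smul_eq_mul, Phi_apply,
      k0, k1, k2, k3] at h
    simp only [Fin.reduceEq, if_true, if_false, mul_zero, zero_mul, mul_one, sub_zero,
      zero_sub, add_zero, zero_add, neg_zero, neg_neg, one_mul] at h
    linear_combination h
  have e2 : b * (starRingEnd ℂ) ρ = 0 := by
    have h := E 2 3
    simp only [dOmega3, dOmegaBar3, map_add, map_smul, smul_eq_mul, Phi_apply,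
      k0, k1, k2, k3] at h
    simp only [Fin.reduceEq, if_true, if_false, mul_zero, zero_mul, mul_one, sub_zero,
      zero_sub, add_zero, zero_add, neg_zero, neg_neg, one_mul] at h
    linear_combination h
  have e3 : a * A - b * (starRingEnd ℂ) A = 0 := by
    have h := E 0 2
    simp only [dOmega3, dOmegaBar3, map_add, map_smul, smul_eq_mul, Phi_apply,
      k0, k1, k2, k3] at h
    simp only [Fin.reduceEq, if_true, if_false, mul_zero, zero_mul, mul_one, sub_zero,
      zero_sub, add_zero, zero_add, neg_zero, neg_neg, one_mul] at h
    linear_combination h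
  have e4 : a * B - b * (starRingEnd ℂ) C = 0 := by
    have h := E 0 3
    simp only [dOmega3, dOmegaBar3, map_add, map_smul, smul_eq_mul, Phi_apply,
      k0, k1, k2, k3] at h
    simp only [Fin.reduceEq, if_true, if_false, mul_zero, zero_mul, mul_one, sub_zero,
      zero_sub, add_zero, zero_add, neg_zero, neg_neg, one_mul] at h
    linear_combination h
  have e5 : a * C - b * (starRingEnd ℂ) B = 0 := by
    have h := E 1 2
    simp only [dOmega3, dOmegaBar3, map_add, map_smul, smul_eq_mul, Phi_apply,
      k0, k1, k2, k3] at h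
    simp only [Fin.reduceEq, if_true, if_false, mul_zero, zero_mul, mul_one, sub_zero,
      zero_sub, add_zero, zero_add, neg_zero, neg_neg, one_mul] at h
    linear_combination h
  have e6 : a * D - b * (starRingEnd ℂ) D = 0 := by
    have h := E 1 3
    simp only [dOmega3, dOmegaBar3, map_add, map_smul, smul_eq_mul, Phi_apply,
      k0, k1, k2, k3] at h
    simp only [Fin.reduceEq, if_true, if_false, mul_zero, zero_mul, mul_one, sub_zero,
      zero_sub, add_zero, zero_add, neg_zero, neg_neg, one_mul] at h
    linear_combination h
  clear E hab0 hφ k0 k1 k2 k3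
  -- reduce to a complex identity
  suffices h : (A * D - B * C) *
      ((starRingEnd ℂ) A * (starRingEnd ℂ) D - (starRingEnd ℂ) B * (starRingEnd ℂ) C) =
      ((B * (starRingEnd ℂ) B + C * (starRingEnd ℂ) C -
        (A * (starRingEnd ℂ) D + (starRingEnd ℂ) A * D) - ρ * (starRingEnd ℂ) ρ) / 2) ^ 2 by
    have hsc : (((A * (starRingEnd ℂ) D + (starRingEnd ℂ) A * D).re : ℝ) : ℂ) =
        A * (starRingEnd ℂ) D + (starRingEnd ℂ) A * D := by
      rw [← Complex.conj_eq_iff_re, map_add, map_mul, map_mul, Complex.conj_conj,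
        Complex.conj_conj]
      ring
    apply Complex.ofReal_injective
    push_cast
    simp only [← Complex.mul_conj, hsc]
    rw [map_sub, map_mul, map_mul]
    linear_combination h
  rcases eq_or_ne a 0 with ha | ha
  · have hb : b ≠ 0 := hab ha
    subst ha
    have hρ : ρ = 0 := by
      have := (mul_eq_zero.mp e2).resolve_left hb; simpa [map_eq_zero] using this
    have hA : A = 0 := by
      have : b * (starRingEnd ℂ) A = 0 := by linear_combination -e3
      have := (mul_eq_zero.mp this).resolve_left hb; simpa [map_eq_zero] using this
    have hB : B = 0 := by
      have : b * (starRingEnd ℂ) B = 0 := by linear_combination -e5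
      have := (mul_eq_zero.mp this).resolve_left hb; simpa [map_eq_zero] using this
    have hC : C = 0 := by
      have : b * (starRingEnd ℂ) C = 0 := by linear_combination -e4
      have := (mul_eq_zero.mp this).resolve_left hb; simpa [map_eq_zero] using this
    have hD : D = 0 := by
      have : b * (starRingEnd ℂ) D = 0 := by linear_combination -e6
      have := (mul_eq_zero.mp this).resolve_left hb; simpa [map_eq_zero] using this
    subst hρ hA hB hC hD; simp
  · have hρ : ρ = 0 := (mul_eq_zero.mp e1).resolve_left ha
    subst hρ
    rcases eq_or_ne b 0 with hb | hb
    · subst hb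
      have hA : A = 0 := by
        have : a * A = 0 := by linear_combination e3
        exact (mul_eq_zero.mp this).resolve_left ha
      have hB : B = 0 := by
        have : a * B = 0 := by linear_combination e4
        exact (mul_eq_zero.mp this).resolve_left ha
      have hC : C = 0 := by
        have : a * C = 0 := by linear_combination e5
        exact (mul_eq_zero.mp this).resolve_left ha
      have hD : D = 0 := by
        have : a * D = 0 := by linear_combination e6
        exact (mul_eq_zero.mp this).resolve_left ha
      subst hA hB hC hD; simp
    · set t : ℂ := b / a with ht
      set cA := (starRingEnd ℂ) A with hcA
      set cB := (starRingEnd ℂ) B with hcB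
      set cC := (starRingEnd ℂ) C with hcC
      set cD := (starRingEnd ℂ) D with hcD
      have hA : A = t * cA := by rw [ht, div_mul_eq_mul_div, eq_div_iff ha]; linear_combination e3
      have hB : B = t * cC := by rw [ht, div_mul_eq_mul_div, eq_div_iff ha]; linear_combination e4
      have hC : C = t * cB := by rw [ht, div_mul_eq_mul_div, eq_div_iff ha]; linear_combination e5
      have hD : D = t * cD := by rw [ht, div_mul_eq_mul_div, eq_div_iff ha]; linear_combination e6
      rw [hA, hB, hC, hD]
      simp only [map_zero]
      ring
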